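/- With Q=343, A=202, B=1.9, C=3.04, α₁=0.32, α₂=0.62, α₀=0.47, s₂=−0.482, L=Q/(B+C), the function h₊(η) = F(η) − G₊(η) has exactly two zeros in the interval [0,1]: a zero η*₊,u ∈ (0.2, 0.3) with h₊′(η*₊,u) > 0 and a zero η*₊,s ∈ (0.9, 1) with h₊′(η*₊,s) < 0. -/

import Mathlib

noncomputable section

namespace GlacialCycles

/-- Insolation `Q = 343` W/m². -/
def Qp : ℝ := 343
/-- OLR constant `A = 202`. -/
def Ap : ℝ := 202
/-- OLR constant `B = 1.9`. -/
def Bp : ℝ := 1.9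
/-- Transport constant `C = 3.04`. -/
def Cp : ℝ := 3.04
/-- Ice-free albedo `α₁ = 0.32`. -/
def α1p : ℝ := 0.32
/-- Ice albedo `α₂ = 0.62`. -/
def α2p : ℝ := 0.62
/-- `α₀ = (α₁+α₂)/2 = 0.47`. -/
def α0p : ℝ := 0.47
/-- `s₂ = −0.482`. -/
def s2p : ℝ := -0.482
/-- `L = Q/(B+C)`. -/
def Lp : ℝ := Qp / (Bp + Cp)

/-- Second even Legendre polynomial `p₂(η) = (3η²−1)/2`. -/
def p2 (η : ℝ) : ℝ := (3*η^2 - 1)/2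
/-- `P₂(η) = ∫₀^η p₂ = (η³−η)/2`. -/
def P2 (η : ℝ) : ℝ := (η^3 - η)/2

/-- `F(η) = (1/B)(Q(1−α₀) − A + C·L·(α₂−α₁)·(η − 1/2 + s₂ P₂(η)))`. -/
def F (η : ℝ) : ℝ :=
  (1/Bp) * (Qp*(1 - α0p) - Ap + Cp*Lp*(α2p - α1p)*(η - 1/2 + s2p * P2 η))

/-- `G_{T_c}(η) = −L s₂ (1−α₀) p₂(η) + T_c`. -/
def G (Tc η : ℝ) : ℝ := -Lp*s2p*(1 - α0p) * p2 η + Tc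

/-- `G₊ = G_{T_c}` with `T_c⁺ = −10`. -/
def Gplus (η : ℝ) : ℝ := G (-10) η
/-- `G₋ = G_{T_c}` with `T_c⁻ = −5.5`. -/
def Gminus (η : ℝ) : ℝ := G (-5.5) η

/-- `h₊ = F − G₊`. -/
def hplus (η : ℝ) : ℝ := F η - Gplus η
/-- `h₋ = F − G₋`. -/
def hminus (η : ℝ) : ℝ := F η - Gminus η

/-- With Table 1 parameters, `h₊ = F − G₊` has exactly two zeros in
`[0,1]`: `η*₊,u ∈ (0.2, 0.3)` with `h₊′(η*₊,u) > 0`, and `η*₊,s ∈ (0.9, 1)` with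
`h₊′(η*₊,s) < 0`. -/

lemma hplus_eq : hplus = fun x : ℝ =>
    (-247989/30875)*x^3 + (-13143417/494000)*x^2 + (1276989/30875)*x + (-4165461/494000) := by
  funext x
  simp only [hplus, F, Gplus, G, P2, p2, Lp, Qp, Ap, Bp, Cp, α0p, α1p, α2p, s2p]
  norm_num
  ring

lemma hplus_hasDerivAt (x : ℝ) :
    HasDerivAt hplus
      (3*(-247989/30875)*x^2 + 2*(-13143417/494000)*x + 1276989/30875) x := by
  rw [hplus_eq]
  have h := (((hasDerivAt_pow 3 x).const_mul ((-247989:ℝ)/30875)).add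
      ((hasDerivAt_pow 2 x).const_mul ((-13143417:ℝ)/494000))).add
      ((hasDerivAt_id x).const_mul ((1276989:ℝ)/30875))
  have h2 := h.add_const ((-4165461:ℝ)/494000)
  convert h2 using 1
  · rfl
  · rfl
  · funext y; simp only [Pi.add_apply, id]
  norm_num
  ring

lemma hplus_deriv (x : ℝ) :
    deriv hplus x = 3*(-247989/30875)*x^2 + 2*(-13143417/494000)*x + 1276989/30875 :=
  (hplus_hasDerivAt x).deriv

lemma hplus_cont : Continuous hplus := by
  rw [hplus_eq]; continuity

lemma deriv_pos_on {x : ℝ} (h0 : 0 ≤ x) (h1 : x ≤ 0.6) : 0 < deriv hplus x := by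
  rw [hplus_deriv]
  nlinarith [mul_nonneg h0 (by linarith : (0:ℝ) ≤ 0.6 - x)]

lemma deriv_neg_on {x : ℝ} (h0 : 0.62 ≤ x) (h1 : x ≤ 1) : deriv hplus x < 0 := by
  rw [hplus_deriv]
  nlinarith [sq_nonneg (x - 0.62), mul_nonneg (by linarith : (0:ℝ) ≤ x - 0.62) (by linarith : (0:ℝ) ≤ 1 - x)]

lemma mono_left : StrictMonoOn hplus (Set.Icc (0:ℝ) 0.6) := by
  apply strictMonoOn_of_deriv_pos (convex_Icc _ _) hplus_cont.continuousOn
  intro x hx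
  rw [interior_Icc] at hx
  exact deriv_pos_on hx.1.le hx.2.le

lemma anti_right : StrictAntiOn hplus (Set.Icc (0.62:ℝ) 1) := by
  apply strictAntiOn_of_deriv_neg (convex_Icc _ _) hplus_cont.continuousOn
  intro x hx
  rw [interior_Icc] at hx
  exact deriv_neg_on hx.1.le hx.2.le

lemma hval (x : ℝ) : hplus x =
    (-247989/30875)*x^3 + (-13143417/494000)*x^2 + (1276989/30875)*x + (-4165461/494000) := by
  rw [hplus_eq]

lemma hmid_pos {x : ℝ} (h0 : 0.6 ≤ x) (h1 : x ≤ 0.62) : 0 < hplus x := by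
  rw [hval]
  nlinarith [mul_nonneg (by linarith : (0:ℝ) ≤ x - 0.6) (by linarith : (0:ℝ) ≤ 0.62 - x),
    mul_nonneg (mul_nonneg (by linarith : (0:ℝ) ≤ x - 0.6) (by linarith : (0:ℝ) ≤ 0.62 - x)) (by linarith : (0:ℝ) ≤ x),
    sq_nonneg (x - 0.61)]

theorem hplus_has_exactly_two_zeros :
    ∃ ηu ηs : ℝ, ηu ∈ Set.Ioo (0.2:ℝ) 0.3 ∧ ηs ∈ Set.Ioo (0.9:ℝ) 1 ∧
      hplus ηu = 0 ∧ hplus ηs = 0 ∧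
      0 < deriv hplus ηu ∧ deriv hplus ηs < 0 ∧
      ∀ η ∈ Set.Icc (0:ℝ) 1, hplus η = 0 → η = ηu ∨ η = ηs := by
  have h02 : hplus 0.2 < 0 := by rw [hval]; norm_num
  have h03 : 0 < hplus 0.3 := by rw [hval]; norm_num
  have h09 : 0 < hplus 0.9 := by rw [hval]; norm_num
  have h1 : hplus 1 < 0 := by rw [hval]; norm_num
  obtain ⟨ηu, hηu, hu0⟩ : ∃ ηu ∈ Set.Ioo (0.2:ℝ) 0.3, hplus ηu = 0 := by
    have := intermediate_value_Ioo (by norm_num : (0.2:ℝ) ≤ 0.3) hplus_cont.continuousOn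
    obtain ⟨x, hx, hx0⟩ := this ⟨h02, h03⟩
    exact ⟨x, hx, hx0⟩
  obtain ⟨ηs, hηs, hs0⟩ : ∃ ηs ∈ Set.Ioo (0.9:ℝ) 1, hplus ηs = 0 := by
    have := intermediate_value_Ioo' (by norm_num : (0.9:ℝ) ≤ 1) hplus_cont.continuousOn
    obtain ⟨x, hx, hx0⟩ := this ⟨h1, h09⟩
    exact ⟨x, hx, hx0⟩
  refine ⟨ηu, ηs, hηu, hηs, hu0, hs0, ?_, ?_, ?_⟩
  · exact deriv_pos_on (by linarith [hηu.1]) (by linarith [hηu.2])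
  · exact deriv_neg_on (by linarith [hηs.1]) (by linarith [hηs.2])
  · intro η hη hη0
    rcases le_or_gt η 0.6 with hle | hgt
    · left
      have hmem1 : η ∈ Set.Icc (0:ℝ) 0.6 := ⟨hη.1, hle⟩
      have hmem2 : ηu ∈ Set.Icc (0:ℝ) 0.6 := ⟨by linarith [hηu.1], by linarith [hηu.2]⟩
      exact mono_left.injOn hmem1 hmem2 (by rw [hη0, hu0])
    rcases le_or_gt 0.62 η with hge | hlt
    · right
      have hmem1 : η ∈ Set.Icc (0.62:ℝ) 1 := ⟨hge, hη.2⟩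
      have hmem2 : ηs ∈ Set.Icc (0.62:ℝ) 1 := ⟨by linarith [hηs.1], hηs.2.le⟩
      exact anti_right.injOn hmem1 hmem2 (by rw [hη0, hs0])
    · exact absurd hη0 (ne_of_gt (hmid_pos hgt.le hlt.le))

end GlacialCycles
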